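/- arXiv:math-ph/0611017 — 3 statements merged into one kernel-verified Lean document; each statement's English description precedes it below -/
import Mathlib

section
/- Let d ≥ 1 and L ≥ 2 be integers, let Λ = (ℤ/2Lℤ)^d be the discrete torus of side 2L, and let N = (2L)^d be its cardinality. Let ε > 0, δ ≥ 0, J ≥ 0, and let μ be a Borel probability measure on C for which there exists a Borel set B ⊆ C with μ(B) ≥ e^{−δ} and with ω(τ) ≥ √ε for every ω ∈ B and every τ ∈ [0,1]. Then (1/N) · log ∫_{C^Λ} exp( J · Y_Λ(ω_Λ) ) ∏_{ℓ∈Λ} μ(dω_ℓ) ≥ d (J ε − δ), where the integral is taken with respect to the product measure μ^{⊗Λ} (and the inequality holds trivially if the integral is +∞). -/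
open MeasureTheory ENNReal

noncomputable section

/-- The space `C` of continuous paths `ω : [0,1] → ℝ` with `ω 0 = ω 1`. -/
abbrev PathSpace : Type := {ω : C(unitInterval, ℝ) // ω 0 = ω 1}

instance : MeasurableSpace PathSpace := borel PathSpace

/-- The discrete torus `Λ = (ℤ/2Lℤ)^d`. -/
abbrev Torus (d L : ℕ) : Type := Fin d → ZMod (2 * L)

/-- Nearest-neighbor relation on the torus: `ℓ - ℓ' = ± e_j` for some coordinate `j`. -/
def isNN {d L : ℕ} (ℓ ℓ' : Torus d L) : Prop :=
  ∃ j : Fin d, ℓ - ℓ' = Pi.single j 1 ∨ ℓ' - ℓ = Pi.single j 1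

/-- `Y(ω, ω') = ∫₀¹ ω(τ) ω'(τ) dτ`. -/
def Ypair (ω ω' : PathSpace) : ℝ := ∫ τ : unitInterval, ω.1 τ * ω'.1 τ

open Classical in
/-- `Y_Λ(ω_Λ) = (1/2) Σ_{ℓ,ℓ' nearest neighbors} Y(ω_ℓ, ω_{ℓ'})`, the sum over ordered pairs. -/
def YLam (d L : ℕ) [NeZero (2 * L)] (ωΛ : Torus d L → PathSpace) : ℝ :=
  (1 / 2) * ∑ ℓ : Torus d L, ∑ ℓ' : Torus d L,
    if isNN ℓ ℓ' then Ypair (ωΛ ℓ) (ωΛ ℓ') else 0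

lemma Ypair_ge {ε : ℝ} (hε : 0 < ε) (ω ω' : PathSpace)
    (h : ∀ τ, Real.sqrt ε ≤ ω.1 τ) (h' : ∀ τ, Real.sqrt ε ≤ ω'.1 τ) :
    ε ≤ Ypair ω ω' := by
  have key : ∀ τ : unitInterval, ε ≤ ω.1 τ * ω'.1 τ := fun τ => by
    calc ε = Real.sqrt ε * Real.sqrt ε := (Real.mul_self_sqrt hε.le).symm
    _ ≤ ω.1 τ * ω'.1 τ :=
      mul_le_mul (h τ) (h' τ) (Real.sqrt_nonneg _) ((Real.sqrt_nonneg _).trans (h τ))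
  have hint : Integrable (fun τ : unitInterval => ω.1 τ * ω'.1 τ) volume := by
    rw [← integrableOn_univ]
    exact ((ω.1.continuous.mul ω'.1.continuous).continuousOn).integrableOn_compact
      isCompact_univ
  calc ε = ∫ _ : unitInterval, ε := by simp
  _ ≤ _ := integral_mono (integrable_const _) hint key

open Classical in
lemma YLam_ge (d L : ℕ) (hL : 2 ≤ L) [NeZero (2 * L)] {ε : ℝ} (hε : 0 < ε)
    (ωΛ : Torus d L → PathSpace)
    (h : ∀ ℓ, ∀ τ : unitInterval, Real.sqrt ε ≤ (ωΛ ℓ).1 τ) :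
    (((2 * L) ^ d : ℕ) : ℝ) * (2 * d * ε) ≤ 2 * YLam d L ωΛ := by
  haveI : Fact (1 < 2 * L) := ⟨by omega⟩
  have one_ne : (1 : ZMod (2 * L)) ≠ 0 := one_ne_zero
  have h2 : (2 : ZMod (2 * L)) ≠ 0 := by
    intro hh
    have h22 : ((2 : ℕ) : ZMod (2 * L)) = 0 := by push_cast; exact hh
    have hdvd := (ZMod.natCast_eq_zero_iff 2 (2 * L)).mp h22
    have := Nat.le_of_dvd (by norm_num) hdvd
    omega
  have hsingle : ∀ j k : Fin d, (Pi.single j 1 : Torus d L) = Pi.single k 1 → j = k := by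
    intro j k hjk
    by_contra hne
    have hc := congrFun hjk j
    rw [Pi.single_eq_same, Pi.single_apply, if_neg hne] at hc
    exact one_ne hc
  have hsum : ∀ j k : Fin d, (Pi.single j 1 : Torus d L) + Pi.single k 1 ≠ 0 := by
    intro j k hh
    have hc := congrFun hh j
    by_cases hjk : j = k
    · subst hjk
      rw [Pi.add_apply, Pi.single_eq_same, Pi.zero_apply] at hc
      exact h2 (by linear_combination hc)
    · rw [Pi.add_apply, Pi.single_eq_same, Pi.single_apply, if_neg hjk, Pi.zero_apply] at hc
      simp at hc
  have inner : ∀ ℓ : Torus d L,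
      2 * d * ε ≤ ∑ ℓ' : Torus d L,
        if isNN ℓ ℓ' then Ypair (ωΛ ℓ) (ωΛ ℓ') else 0 := by
    intro ℓ
    set g : Torus d L → ℝ := fun ℓ' => if isNN ℓ ℓ' then Ypair (ωΛ ℓ) (ωΛ ℓ') else 0 with hgdef
    have hg0 : ∀ ℓ', 0 ≤ g ℓ' := by
      intro ℓ'
      by_cases hnn : isNN ℓ ℓ'
      · simp only [g, if_pos hnn]
        exact hε.le.trans (Ypair_ge hε _ _ (h ℓ) (h ℓ'))
      · simp [g, hnn]
    set f : Fin d × Bool → Torus d L :=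
      fun x => if x.2 then ℓ + Pi.single x.1 1 else ℓ - Pi.single x.1 1 with hfdef
    have hfinj : Function.Injective f := by
      rintro ⟨j, b⟩ ⟨k, c⟩ hfe
      rcases b <;> rcases c <;>
        simp only [hfdef, Bool.false_eq_true, if_false, if_true] at hfe
      · rw [_root_.sub_right_inj] at hfe
        exact congrArg (fun x => (x, false)) (hsingle j k hfe)
      · exact absurd (by linear_combination -hfe) (hsum j k)
      · exact absurd (by linear_combination hfe) (hsum j k)
      · rw [_root_.add_right_inj] at hfe
        exact congrArg (fun x => (x, true)) (hsingle j k hfe)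
    have hnnf : ∀ x, isNN ℓ (f x) := by
      rintro ⟨j, b⟩
      rcases b
      · exact ⟨j, Or.inl (by simp [hfdef])⟩
      · exact ⟨j, Or.inr (by simp [hfdef])⟩
    have hgf : ∀ x, ε ≤ g (f x) := by
      intro x
      simp only [g, if_pos (hnnf x)]
      exact Ypair_ge hε _ _ (h ℓ) (h _)
    calc 2 * d * ε = ∑ _x : Fin d × Bool, ε := by
          rw [Finset.sum_const, Finset.card_univ, Fintype.card_prod, Fintype.card_fin,
            Fintype.card_bool, nsmul_eq_mul]
          push_cast
          ring
    _ ≤ ∑ x : Fin d × Bool, g (f x) := Finset.sum_le_sum fun x _ => hgf x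
    _ = ∑ ℓ' ∈ Finset.image f Finset.univ, g ℓ' :=
        (Finset.sum_image (fun x _ y _ hxy => hfinj hxy)).symm
    _ ≤ ∑ ℓ' : Torus d L, g ℓ' :=
        Finset.sum_le_sum_of_subset_of_nonneg (Finset.subset_univ _)
          (fun i _ _ => hg0 i)
  have card : (Fintype.card (Torus d L) : ℝ) = (((2 * L) ^ d : ℕ) : ℝ) := by
    simp [Torus, ZMod.card]
  calc (((2 * L) ^ d : ℕ) : ℝ) * (2 * d * ε)
      = ∑ _ℓ : Torus d L, 2 * d * ε := by
        rw [Finset.sum_const, Finset.card_univ, nsmul_eq_mul, card]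
  _ ≤ ∑ ℓ : Torus d L, ∑ ℓ' : Torus d L,
        if isNN ℓ ℓ' then Ypair (ωΛ ℓ) (ωΛ ℓ') else 0 :=
      Finset.sum_le_sum fun ℓ _ => inner ℓ
  _ = 2 * YLam d L ωΛ := by rw [YLam]; ring

/-- Path-measure form of Lemma 1 of the paper (the analog of Lemma 3.4 of
Fröhlich–Simon–Spencer): `(1/N) log ∫ exp(J Y_Λ) dμ^{⊗Λ} ≥ d (Jε - δ)`, stated in
`[0,∞]` by exponentiating both sides (so it holds trivially if the integral is `+∞`). -/
theorem pressure_lower_bound (d L : ℕ) (hd : 1 ≤ d) (hL : 2 ≤ L) [NeZero (2 * L)]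
    (ε δ J : ℝ) (hε : 0 < ε) (hδ : 0 ≤ δ) (hJ : 0 ≤ J)
    (μ : Measure PathSpace) (hμ : IsProbabilityMeasure μ)
    (B : Set PathSpace) (hBm : MeasurableSet B)
    (hμB : ENNReal.ofReal (Real.exp (-δ)) ≤ μ B)
    (hBpos : ∀ ω ∈ B, ∀ τ : unitInterval, Real.sqrt ε ≤ ω.1 τ) :
    ENNReal.ofReal (Real.exp ((((2 * L) ^ d : ℕ) : ℝ) * (d * (J * ε - δ))))
      ≤ ∫⁻ ωΛ : Torus d L → PathSpace,
          ENNReal.ofReal (Real.exp (J * YLam d L ωΛ)) ∂(Measure.pi fun _ => μ) := by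
  set N : ℕ := (2 * L) ^ d
  set S : Set (Torus d L → PathSpace) := Set.univ.pi fun _ => B
  have hSm : MeasurableSet S := MeasurableSet.univ_pi fun _ => hBm
  set c : ℝ≥0∞ := ENNReal.ofReal (Real.exp (J * ((N : ℝ) * (d * ε))))
  -- pointwise bound: indicator ≤ integrand
  have hpt : ∀ ωΛ, S.indicator (fun _ => c) ωΛ
      ≤ ENNReal.ofReal (Real.exp (J * YLam d L ωΛ)) := by
    intro ωΛ
    by_cases hS : ωΛ ∈ S
    · rw [Set.indicator_of_mem hS]
      apply ENNReal.ofReal_le_ofReal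
      apply Real.exp_le_exp.mpr
      apply mul_le_mul_of_nonneg_left _ hJ
      have := YLam_ge d L hL hε ωΛ (fun ℓ τ => hBpos _ (hS ℓ (Set.mem_univ ℓ)) τ)
      nlinarith [this]
    · rw [Set.indicator_of_notMem hS]; exact zero_le
  calc ENNReal.ofReal (Real.exp ((N : ℝ) * (d * (J * ε - δ))))
      ≤ c * ENNReal.ofReal (Real.exp (-δ)) ^ N := by
        rw [show c = ENNReal.ofReal (Real.exp (J * ((N : ℝ) * (d * ε)))) from rfl]
        rw [← ENNReal.ofReal_pow (Real.exp_nonneg _), ← Real.exp_nat_mul,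
          ← ENNReal.ofReal_mul (Real.exp_nonneg _), ← Real.exp_add]
        apply ENNReal.ofReal_le_ofReal
        apply Real.exp_le_exp.mpr
        have h1 : (1 : ℝ) ≤ (d : ℝ) := by exact_mod_cast hd
        have hdN : (N : ℝ) * δ ≤ (N : ℝ) * (d : ℝ) * δ := by
          nlinarith [mul_nonneg (mul_nonneg (Nat.cast_nonneg (α := ℝ) N) hδ)
            (sub_nonneg.mpr h1)]
        linarith [hdN]
  _ ≤ c * μ B ^ N := by
        gcongr
  _ = c * (Measure.pi fun _ : Torus d L => μ) S := by
        rw [Measure.pi_pi]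
        congr 1
        rw [Finset.prod_const]
        congr 1
        simp [N, Torus, ZMod.card]
  _ = ∫⁻ ωΛ, S.indicator (fun _ => c) ωΛ ∂(Measure.pi fun _ => μ) := by
        rw [lintegral_indicator hSm]; simp [mul_comm]
  _ ≤ _ := lintegral_mono hpt
end
end

section
/- Let d ≥ 1 and L ≥ 2 be integers, Λ = (ℤ/2Lℤ)^d the discrete torus of side 2L, N = (2L)^d, and J > 0. Let ν be a Borel probability measure on C such that ∫_C exp( t ∫₀¹ ω(τ)² dτ ) ν(dω) < ∞ for every t > 0. Define Z(J) := ∫_{C^Λ} exp( J · Y_Λ(ω_Λ) ) ν^{⊗Λ}(dω_Λ) and the Gibbs probability measure μ_J(dω_Λ) := exp( J · Y_Λ(ω_Λ) ) ν^{⊗Λ}(dω_Λ) / Z(J). Then (1/N) Σ_{ℓ∈Λ} ∫_{C^Λ} ( ∫₀¹ ω_ℓ(τ)² dτ ) μ_J(dω_Λ) ≥ log Z(J) / (J · d · N). -/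
open MeasureTheory ENNReal

noncomputable section

/-- The partition function `Z(J) = ∫ exp(J Y_Λ) dν^{⊗Λ}`. -/
def Zfun (d L : ℕ) [NeZero (2 * L)] (ν : Measure PathSpace) (J : ℝ) : ℝ :=
  ∫ ωΛ : Torus d L → PathSpace, Real.exp (J * YLam d L ωΛ) ∂(Measure.pi fun _ => ν)

/-- The Gibbs probability measure `μ_J = Z(J)⁻¹ exp(J Y_Λ) ν^{⊗Λ}`. -/
def gibbs (d L : ℕ) [NeZero (2 * L)] (ν : Measure PathSpace) (J : ℝ) :
    Measure (Torus d L → PathSpace) :=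
  (Measure.pi fun _ => ν).withDensity
    (fun ωΛ => ENNReal.ofReal (Real.exp (J * YLam d L ωΛ) / Zfun d L ν J))

/-! ### Auxiliary lemmas -/

namespace MSLB

instance : BorelSpace PathSpace := ⟨rfl⟩

lemma integrable_cm (f : C(unitInterval, ℝ)) : Integrable (fun τ => f τ) volume := by
  exact (BoundedContinuousFunction.mkOfCompact f).integrable volume

lemma continuous_intCM : Continuous fun f : C(unitInterval, ℝ) => ∫ τ, f τ := by
  have h : LipschitzWith 1 fun f : C(unitInterval, ℝ) => ∫ τ, f τ := by
    refine LipschitzWith.of_dist_le_mul fun f g => ?_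
    rw [dist_eq_norm, ← integral_sub (integrable_cm f) (integrable_cm g), NNReal.coe_one, one_mul,
      dist_eq_norm]
    have h2 : ∀ τ : unitInterval, ‖f τ - g τ‖ ≤ ‖f - g‖ := by
      intro τ
      calc ‖f τ - g τ‖ = ‖(f - g) τ‖ := by simp
        _ ≤ ‖f - g‖ := ContinuousMap.norm_coe_le_norm _ τ
    have h3 := norm_integral_le_of_norm_le_const (μ := (volume : Measure unitInterval))
      (f := fun τ : unitInterval => f τ - g τ) (Filter.Eventually.of_forall h2)
    simpa using h3
  exact h.continuous

/-- `X ω = ∫₀¹ ω(τ)² dτ`. -/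
def Xsq (ω : PathSpace) : ℝ := ∫ τ : unitInterval, (ω.1 τ) ^ 2

lemma continuous_Xsq : Continuous Xsq := by
  have h1 : Continuous fun ω : PathSpace => (ω.1 * ω.1 : C(unitInterval, ℝ)) :=
    continuous_subtype_val.mul continuous_subtype_val
  have h2 := continuous_intCM.comp h1
  convert h2 using 1
  funext ω
  simp [Xsq, pow_two]

lemma continuous_Ypair : Continuous fun p : PathSpace × PathSpace => Ypair p.1 p.2 := by
  have h1 : Continuous fun p : PathSpace × PathSpace => (p.1.1 * p.2.1 : C(unitInterval, ℝ)) :=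
    (continuous_subtype_val.comp continuous_fst).mul (continuous_subtype_val.comp continuous_snd)
  have h2 := continuous_intCM.comp h1
  convert h2 using 1
  funext p
  rfl

lemma Xsq_nonneg (ω : PathSpace) : 0 ≤ Xsq ω :=
  integral_nonneg fun τ => sq_nonneg _

lemma integrable_sq (ω : PathSpace) : Integrable (fun τ : unitInterval => (ω.1 τ) ^ 2) volume := by
  simpa [pow_two] using integrable_cm (ω.1 * ω.1)

lemma integrable_mul (ω ω' : PathSpace) :
    Integrable (fun τ : unitInterval => ω.1 τ * ω'.1 τ) volume := by
  simpa using integrable_cm (ω.1 * ω'.1)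

lemma abs_Ypair_le (ω ω' : PathSpace) : |Ypair ω ω'| ≤ (Xsq ω + Xsq ω') / 2 := by
  have h1 : |Ypair ω ω'| ≤ ∫ τ : unitInterval, |ω.1 τ * ω'.1 τ| := by
    have h0 := norm_integral_le_integral_norm (μ := (volume : Measure unitInterval))
        (f := fun τ : unitInterval => ω.1 τ * ω'.1 τ)
    simp only [Real.norm_eq_abs] at h0
    exact h0
  refine h1.trans ?_
  have h2 : (∫ τ : unitInterval, |ω.1 τ * ω'.1 τ|)
      ≤ ∫ τ : unitInterval, ((ω.1 τ) ^ 2 + (ω'.1 τ) ^ 2) / 2 := by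
    refine integral_mono (integrable_mul ω ω').abs
      (((integrable_sq ω).add (integrable_sq ω')).div_const 2) fun τ => ?_
    have := abs_mul (ω.1 τ) (ω'.1 τ)
    nlinarith [sq_nonneg (|ω.1 τ| - |ω'.1 τ|), sq_abs (ω.1 τ), sq_abs (ω'.1 τ),
      abs_nonneg (ω.1 τ), abs_nonneg (ω'.1 τ)]
  refine h2.trans_eq ?_
  rw [integral_div, integral_add (integrable_sq ω) (integrable_sq ω')]
  rfl

variable {d L : ℕ} [NeZero (2 * L)]

lemma isNN_symm {ℓ ℓ' : Torus d L} : isNN ℓ ℓ' ↔ isNN ℓ' ℓ :=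
  exists_congr fun _ => or_comm

omit [NeZero (2 * L)] in
lemma single_ne_neg (hL : 2 ≤ L) (j k : Fin d) :
    (Pi.single j 1 : Torus d L) ≠ -Pi.single k 1 := by
  haveI : Fact (1 < 2 * L) := ⟨by omega⟩
  intro h
  have hj := congrFun h j
  by_cases hjk : j = k
  · subst hjk
    simp only [Pi.single_eq_same, Pi.neg_apply] at hj
    have h2 : (2 : ZMod (2 * L)) = 0 := by linear_combination hj
    rw [show ((2 : ZMod (2*L)) = ((2:ℕ) : ZMod (2*L))) by push_cast; ring,
      ZMod.natCast_eq_zero_iff] at h2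
    have := Nat.le_of_dvd (by norm_num) h2
    omega
  · rw [Pi.single_eq_same, Pi.neg_apply] at hj
    rw [Pi.single_eq_of_ne hjk] at hj
    simp at hj

omit [NeZero (2 * L)] in
lemma single_inj (hL : 2 ≤ L) {j k : Fin d}
    (h : (Pi.single j 1 : Torus d L) = Pi.single k 1) : j = k := by
  haveI : Fact (1 < 2 * L) := ⟨by omega⟩
  by_contra hjk
  have hj := congrFun h j
  rw [Pi.single_eq_same] at hj
  rw [Pi.single_eq_of_ne hjk] at hj
  simp at hj

open Classical in
lemma card_nn (hL : 2 ≤ L) (ℓ : Torus d L) :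
    (Finset.univ.filter fun ℓ' => isNN ℓ ℓ').card = 2 * d := by
  classical
  set φ : Fin d × Bool → Torus d L :=
    fun jb => if jb.2 then ℓ + Pi.single jb.1 1 else ℓ - Pi.single jb.1 1 with hφ
  have hinj : Function.Injective φ := by
    rintro ⟨j, b⟩ ⟨k, c⟩ h
    simp only [hφ] at h
    cases b <;> cases c <;>
      simp only [Bool.false_eq_true, if_true, if_false, reduceIte] at h
    · rw [single_inj hL (sub_right_inj.mp h)]
    · exfalso
      have h' : (Pi.single k 1 : Torus d L) = -Pi.single j 1 := by
        have h2 : ℓ + -Pi.single j 1 = ℓ + Pi.single k 1 := by rw [← sub_eq_add_neg, h]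
        exact (add_left_cancel h2).symm
      exact single_ne_neg hL k j h'
    · exfalso
      have h' : (Pi.single j 1 : Torus d L) = -Pi.single k 1 := by
        have h2 : ℓ + Pi.single j 1 = ℓ + -Pi.single k 1 := by rw [← sub_eq_add_neg, h]
        exact add_left_cancel h2
      exact single_ne_neg hL j k h'
    · rw [single_inj hL (add_left_cancel h)]
  have himg : (Finset.univ.filter fun ℓ' => isNN ℓ ℓ') = Finset.univ.image φ := by
    ext ℓ'
    simp only [Finset.mem_filter, Finset.mem_univ, true_and, Finset.mem_image]
    constructor
    · rintro ⟨j, h | h⟩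
      · refine ⟨(j, false), ?_⟩
        simp only [hφ, Bool.false_eq_true, if_false]
        rw [← h]; abel
      · refine ⟨(j, true), ?_⟩
        simp only [hφ, if_true]
        rw [← h]; abel
    · rintro ⟨⟨j, b⟩, -, rfl⟩
      cases b
      · exact ⟨j, Or.inl (by simp only [hφ, Bool.false_eq_true, if_false]; abel)⟩
      · exact ⟨j, Or.inr (by simp only [hφ, if_true]; abel)⟩
  rw [himg, Finset.card_image_of_injective _ hinj]
  simp [Fintype.card_prod]
  ring

open Classical in
lemma sum_nn_const (hL : 2 ≤ L) (ℓ : Torus d L) (c : ℝ) :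
    (∑ ℓ' : Torus d L, if isNN ℓ ℓ' then c else 0) = 2 * (d : ℝ) * c := by
  classical
  rw [← Finset.sum_filter, Finset.sum_const, card_nn hL ℓ, nsmul_eq_mul]
  push_cast; ring

open Classical in
lemma sum_nn_pairs (hL : 2 ≤ L) (g : Torus d L → ℝ) :
    (∑ ℓ : Torus d L, ∑ ℓ' : Torus d L, if isNN ℓ ℓ' then (g ℓ + g ℓ') / 2 else 0)
      = 2 * (d : ℝ) * ∑ ℓ, g ℓ := by
  classical
  have split : ∀ ℓ ℓ' : Torus d L, (if isNN ℓ ℓ' then (g ℓ + g ℓ') / 2 else 0)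
      = (if isNN ℓ ℓ' then g ℓ else 0) / 2 + (if isNN ℓ ℓ' then g ℓ' else 0) / 2 := by
    intro ℓ ℓ'; by_cases h : isNN ℓ ℓ' <;> simp [h] <;> ring
  simp_rw [split, Finset.sum_add_distrib]
  have h1 : ∀ ℓ : Torus d L, (∑ ℓ' : Torus d L, (if isNN ℓ ℓ' then g ℓ else 0) / 2)
      = (d : ℝ) * g ℓ := by
    intro ℓ; rw [← Finset.sum_div, sum_nn_const hL]; ring
  have h2 : (∑ ℓ : Torus d L, ∑ ℓ' : Torus d L, (if isNN ℓ ℓ' then g ℓ' else 0) / 2)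
      = (d : ℝ) * ∑ ℓ, g ℓ := by
    rw [Finset.sum_comm]
    have inner : ∀ ℓ' : Torus d L, (∑ ℓ : Torus d L, (if isNN ℓ ℓ' then g ℓ' else 0) / 2)
        = (d : ℝ) * g ℓ' := by
      intro ℓ'
      have hsw : ∀ ℓ : Torus d L, (if isNN ℓ ℓ' then g ℓ' else 0)
          = (if isNN ℓ' ℓ then g ℓ' else 0) := fun ℓ => if_congr isNN_symm rfl rfl
      calc (∑ ℓ : Torus d L, (if isNN ℓ ℓ' then g ℓ' else 0) / 2)
          = (∑ ℓ : Torus d L, (if isNN ℓ' ℓ then g ℓ' else 0) / 2) :=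
            Finset.sum_congr rfl fun ℓ _ => by rw [hsw ℓ]
        _ = (d : ℝ) * g ℓ' := by rw [← Finset.sum_div, sum_nn_const hL]; ring
    rw [Finset.sum_congr rfl fun ℓ' _ => inner ℓ', ← Finset.mul_sum]
  rw [h2, Finset.sum_congr rfl fun ℓ _ => h1 ℓ, ← Finset.mul_sum]
  ring

lemma measurable_Xsq : Measurable Xsq := continuous_Xsq.measurable

lemma measurable_YLam : Measurable (YLam d L) := by
  classical
  have h : Measurable fun ωΛ : Torus d L → PathSpace =>
      ∑ ℓ : Torus d L, ∑ ℓ' : Torus d L,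
        if isNN ℓ ℓ' then Ypair (ωΛ ℓ) (ωΛ ℓ') else 0 := by
    refine Finset.measurable_sum _ fun ℓ _ => Finset.measurable_sum _ fun ℓ' _ => ?_
    by_cases h : isNN ℓ ℓ'
    · simp only [if_pos h]
      have hc : Continuous fun ωΛ : Torus d L → PathSpace => Ypair (ωΛ ℓ) (ωΛ ℓ') := by
        have h2 := continuous_Ypair.comp
          (show Continuous fun ωΛ : Torus d L → PathSpace =>
              ((ωΛ ℓ, ωΛ ℓ') : PathSpace × PathSpace) from
            (continuous_apply ℓ).prodMk (continuous_apply ℓ'))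
        exact h2
      exact hc.measurable
    · simp only [if_neg h]
      exact measurable_const
  have : YLam d L = fun ωΛ => (1/2 : ℝ) * ∑ ℓ : Torus d L, ∑ ℓ' : Torus d L,
      if isNN ℓ ℓ' then Ypair (ωΛ ℓ) (ωΛ ℓ') else 0 := rfl
  rw [this]
  exact h.const_mul _

lemma abs_YLam_le (hL : 2 ≤ L) (ωΛ : Torus d L → PathSpace) :
    |YLam d L ωΛ| ≤ (d : ℝ) * ∑ ℓ, Xsq (ωΛ ℓ) := by
  classical
  have hS : |∑ ℓ : Torus d L, ∑ ℓ' : Torus d L,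
      if isNN ℓ ℓ' then Ypair (ωΛ ℓ) (ωΛ ℓ') else 0|
      ≤ ∑ ℓ : Torus d L, ∑ ℓ' : Torus d L,
        if isNN ℓ ℓ' then (Xsq (ωΛ ℓ) + Xsq (ωΛ ℓ')) / 2 else 0 := by
    refine (Finset.abs_sum_le_sum_abs _ _).trans ?_
    refine Finset.sum_le_sum fun ℓ _ => ?_
    refine (Finset.abs_sum_le_sum_abs _ _).trans ?_
    refine Finset.sum_le_sum fun ℓ' _ => ?_
    by_cases h : isNN ℓ ℓ'
    · simp only [if_pos h]
      exact abs_Ypair_le _ _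
    · simp [h]
  rw [sum_nn_pairs hL] at hS
  have : |YLam d L ωΛ| = (1/2 : ℝ) * |∑ ℓ : Torus d L, ∑ ℓ' : Torus d L,
      if isNN ℓ ℓ' then Ypair (ωΛ ℓ) (ωΛ ℓ') else 0| := by
    rw [show YLam d L ωΛ = (1/2 : ℝ) * ∑ ℓ : Torus d L, ∑ ℓ' : Torus d L,
      (if isNN ℓ ℓ' then Ypair (ωΛ ℓ) (ωΛ ℓ') else 0) from rfl, abs_mul]
    norm_num
  rw [this]
  nlinarith [hS]

end MSLB

open MSLB

/-- Path-measure form of Lemma 2 of the paper: the mean squared displacement of the Gibbs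
measure dominates `log Z(J) / (J d N)`. -/
theorem mean_square_lower_bound (d L : ℕ) (hd : 1 ≤ d) (hL : 2 ≤ L) [NeZero (2 * L)]
    (J : ℝ) (hJ : 0 < J)
    (ν : Measure PathSpace) (hν : IsProbabilityMeasure ν)
    (hexp : ∀ t : ℝ, 0 < t →
      Integrable (fun ω : PathSpace => Real.exp (t * ∫ τ : unitInterval, (ω.1 τ) ^ 2)) ν) :
    Real.log (Zfun d L ν J) / (J * d * (((2 * L) ^ d : ℕ) : ℝ))
      ≤ (1 / (((2 * L) ^ d : ℕ) : ℝ)) * ∑ ℓ : Torus d L,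
          ∫ ωΛ : Torus d L → PathSpace,
            (∫ τ : unitInterval, ((ωΛ ℓ).1 τ) ^ 2) ∂(gibbs d L ν J) := by
  classical
  haveI := hν
  set μpi : Measure (Torus d L → PathSpace) := Measure.pi fun _ => ν with hμpi
  haveI : IsProbabilityMeasure μpi :=
    inferInstanceAs (IsProbabilityMeasure (Measure.pi fun _ : Torus d L => ν))
  set Z := Zfun d L ν J with hZdef
  set Y := YLam d L with hYdef
  have hd' : (0 : ℝ) < d := by exact_mod_cast Nat.pos_of_ne_zero (by omega)
  have hN : (0 : ℝ) < (((2 * L) ^ d : ℕ) : ℝ) := by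
    exact_mod_cast pow_pos (by omega : 0 < 2 * L) d
  -- basic facts
  have hXnn : ∀ ω : PathSpace, 0 ≤ Xsq ω := Xsq_nonneg
  have hsumXnn : ∀ ωΛ : Torus d L → PathSpace, 0 ≤ ∑ m, Xsq (ωΛ m) :=
    fun ωΛ => Finset.sum_nonneg fun m _ => hXnn _
  have hYle : ∀ ωΛ, |Y ωΛ| ≤ (d : ℝ) * ∑ ℓ, Xsq (ωΛ ℓ) := abs_YLam_le hL
  have hYpt : ∀ ωΛ, Y ωΛ ≤ (d : ℝ) * ∑ ℓ, Xsq (ωΛ ℓ) :=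
    fun ω => (le_abs_self _).trans (hYle ω)
  have hmY : Measurable Y := measurable_YLam
  -- product integrability
  have hintprod : ∀ t : ℝ, 0 < t →
      Integrable (fun ωΛ : Torus d L → PathSpace => Real.exp (t * ∑ m, Xsq (ωΛ m))) μpi := by
    intro t ht
    letI : MeasureSpace PathSpace := ⟨ν⟩
    haveI : SigmaFinite (volume : Measure PathSpace) :=
      inferInstanceAs (SigmaFinite ν)
    have h := MeasureTheory.Integrable.fintype_prod (E := PathSpace)
      (f := fun _ : Torus d L => fun ω : PathSpace => Real.exp (t * Xsq ω))
      (fun _ => hexp t ht)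
    have heq : (fun ωΛ : Torus d L → PathSpace => Real.exp (t * ∑ m, Xsq (ωΛ m)))
        = fun ωΛ : Torus d L → PathSpace => ∏ m, Real.exp (t * Xsq (ωΛ m)) := by
      funext ωΛ
      rw [← Real.exp_sum, Finset.mul_sum]
    rw [heq, hμpi]
    have hv : (volume : Measure (Torus d L → PathSpace)) = Measure.pi fun _ => ν := by
      rw [MeasureTheory.volume_pi]
      rfl
    rw [← hv]
    exact h
  have hJYpt : ∀ ωΛ, Real.exp (J * Y ωΛ) ≤ Real.exp ((J * d) * ∑ m, Xsq (ωΛ m)) := by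
    intro ω
    apply Real.exp_le_exp.mpr
    calc J * Y ω ≤ J * ((d : ℝ) * ∑ m, Xsq (ω m)) :=
          mul_le_mul_of_nonneg_left (hYpt ω) hJ.le
      _ = (J * d) * ∑ m, Xsq (ω m) := by ring
  have hmExp : Measurable fun ωΛ => Real.exp (J * Y ωΛ) := (hmY.const_mul J).exp
  have hint_exp : Integrable (fun ωΛ => Real.exp (J * Y ωΛ)) μpi := by
    refine Integrable.mono' (hintprod (J * d) (by positivity)) hmExp.aestronglyMeasurable ?_
    filter_upwards with ω
    rw [Real.norm_eq_abs, abs_of_pos (Real.exp_pos _)]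
    exact hJYpt ω
  have hXle_exp : ∀ (ωΛ : Torus d L → PathSpace), (∑ m, Xsq (ωΛ m)) ≤
      Real.exp (∑ m, Xsq (ωΛ m)) := by
    intro ω
    linarith [Real.add_one_le_exp (∑ m, Xsq (ω m))]
  have hint_Xexp : ∀ ℓ : Torus d L,
      Integrable (fun ωΛ => Xsq (ωΛ ℓ) * Real.exp (J * Y ωΛ)) μpi := by
    intro ℓ
    refine Integrable.mono' (hintprod (1 + J * d) (by positivity))
      (((measurable_Xsq.comp (measurable_pi_apply ℓ)).mul hmExp).aestronglyMeasurable) ?_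
    filter_upwards with ω
    rw [Real.norm_eq_abs, abs_of_nonneg (mul_nonneg (hXnn _) (Real.exp_pos _).le)]
    have h1 : Xsq (ω ℓ) ≤ Real.exp (∑ m, Xsq (ω m)) :=
      (Finset.single_le_sum (fun m _ => hXnn (ω m)) (Finset.mem_univ ℓ)).trans (hXle_exp ω)
    calc Xsq (ω ℓ) * Real.exp (J * Y ω)
        ≤ Real.exp (∑ m, Xsq (ω m)) * Real.exp ((J * d) * ∑ m, Xsq (ω m)) :=
          mul_le_mul h1 (hJYpt ω) (Real.exp_pos _).le (Real.exp_pos _).le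
      _ = Real.exp ((1 + J * d) * ∑ m, Xsq (ω m)) := by
          rw [← Real.exp_add]; ring_nf
  have hint_Yexp : Integrable (fun ωΛ => Y ωΛ * Real.exp (J * Y ωΛ)) μpi := by
    refine Integrable.mono' ((hintprod (1 + J * d) (by positivity)).const_mul (d : ℝ))
      ((hmY.mul hmExp).aestronglyMeasurable) ?_
    filter_upwards with ω
    rw [Real.norm_eq_abs, abs_mul, abs_of_pos (Real.exp_pos _)]
    calc |Y ω| * Real.exp (J * Y ω)
        ≤ ((d : ℝ) * ∑ m, Xsq (ω m)) * Real.exp (J * Y ω) :=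
          mul_le_mul_of_nonneg_right (hYle ω) (Real.exp_pos _).le
      _ ≤ ((d : ℝ) * ∑ m, Xsq (ω m)) * Real.exp ((J * d) * ∑ m, Xsq (ω m)) :=
          mul_le_mul_of_nonneg_left (hJYpt ω) (mul_nonneg hd'.le (hsumXnn ω))
      _ ≤ ((d : ℝ) * Real.exp (∑ m, Xsq (ω m))) * Real.exp ((J * d) * ∑ m, Xsq (ω m)) :=
          mul_le_mul_of_nonneg_right
            (mul_le_mul_of_nonneg_left (hXle_exp ω) hd'.le) (Real.exp_pos _).le
      _ = (d : ℝ) * Real.exp ((1 + J * d) * ∑ m, Xsq (ω m)) := by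
          rw [mul_assoc, ← Real.exp_add]; ring_nf
  -- Z is positive
  have hZint : Z = ∫ ω, Real.exp (J * Y ω) ∂μpi := rfl
  have hZpos : 0 < Z := by
    rw [hZint]
    rw [integral_pos_iff_support_of_nonneg_ae
      (Filter.Eventually.of_forall fun ω => (Real.exp_pos _).le) hint_exp]
    have hs : (Function.support fun ω : Torus d L → PathSpace => Real.exp (J * Y ω))
        = Set.univ := by
      ext ω; simp [Function.mem_support, Real.exp_ne_zero]
    rw [hs, measure_univ]
    norm_num
  -- integrals against gibbs measure
  have hgibbs : ∀ g : (Torus d L → PathSpace) → ℝ,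
      (∫ ω, g ω ∂(gibbs d L ν J)) = ∫ ω, (Real.exp (J * Y ω) / Z) * g ω ∂μpi := by
    intro g
    have hm : Measurable fun ω : Torus d L → PathSpace =>
        Real.toNNReal (Real.exp (J * Y ω) / Z) :=
      (hmExp.div_const Z).real_toNNReal
    rw [show gibbs d L ν J = μpi.withDensity
        (fun ω => ((Real.toNNReal (Real.exp (J * Y ω) / Z) : NNReal) : ℝ≥0∞)) from rfl]
    rw [integral_withDensity_eq_integral_smul hm g]
    refine integral_congr_ae (Filter.Eventually.of_forall fun ω => ?_)
    show (Real.exp (J * Y ω) / Z).toNNReal • g ω = Real.exp (J * Y ω) / Z * g ω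
    rw [NNReal.smul_def, Real.coe_toNNReal _ (div_nonneg (Real.exp_pos _).le hZpos.le),
      smul_eq_mul]
  -- the entropy inequality : Z log Z ≤ J * B where B = ∫ Y e^{JY}
  set B := ∫ ω, Y ω * Real.exp (J * Y ω) ∂μpi with hBdef
  have hZlog : Z * Real.log Z ≤ J * B := by
    have hpt : ∀ ω, Real.log Z * Real.exp (J * Y ω) + Real.exp (J * Y ω) - Z
        ≤ J * (Y ω * Real.exp (J * Y ω)) := by
      intro ω
      have h1 : 1 - Real.exp (Real.log Z - J * Y ω) ≤ J * Y ω - Real.log Z := by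
        have := Real.add_one_le_exp (Real.log Z - J * Y ω)
        linarith
      have h2 := mul_le_mul_of_nonneg_right h1 (Real.exp_pos (J * Y ω)).le
      have h3 : Real.exp (Real.log Z - J * Y ω) * Real.exp (J * Y ω) = Z := by
        rw [← Real.exp_add, sub_add_cancel, Real.exp_log hZpos]
      nlinarith [h2, h3]
    have hlhs1 : Integrable (fun ω => Real.log Z * Real.exp (J * Y ω)
        + Real.exp (J * Y ω)) μpi := (hint_exp.const_mul (Real.log Z)).add hint_exp
    have hlhs : Integrable (fun ω => Real.log Z * Real.exp (J * Y ω)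
        + Real.exp (J * Y ω) - Z) μpi := hlhs1.sub (integrable_const Z)
    have hrhs : Integrable (fun ω => J * (Y ω * Real.exp (J * Y ω))) μpi :=
      hint_Yexp.const_mul J
    have hmono := integral_mono hlhs hrhs hpt
    rw [integral_sub hlhs1 (integrable_const Z),
      integral_add (hint_exp.const_mul (Real.log Z)) hint_exp, integral_const_mul,
      ← hZint, integral_const, probReal_univ] at hmono
    rw [integral_const_mul, ← hBdef] at hmono
    simp only [ENNReal.toReal_one, smul_eq_mul, one_mul] at hmono
    linarith [hmono]
  -- rewrite the sum of gibbs integrals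
  set A := ∫ ω, (∑ ℓ, Xsq (ω ℓ)) * Real.exp (J * Y ω) ∂μpi with hAdef
  have hAint : Integrable (fun ω => (∑ ℓ, Xsq (ω ℓ)) * Real.exp (J * Y ω)) μpi := by
    have h := integrable_finset_sum (μ := μpi) Finset.univ
      (fun ℓ (_ : ℓ ∈ Finset.univ) => hint_Xexp ℓ)
    have heq : (fun ω : Torus d L → PathSpace => ∑ ℓ, Xsq (ω ℓ) * Real.exp (J * Y ω))
        = fun ω => (∑ ℓ, Xsq (ω ℓ)) * Real.exp (J * Y ω) := by
      funext ω; rw [Finset.sum_mul]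
    rwa [heq] at h
  have hSl : ∀ ℓ : Torus d L, (∫ ω, Xsq (ω ℓ) ∂(gibbs d L ν J))
      = (∫ ω, Xsq (ω ℓ) * Real.exp (J * Y ω) ∂μpi) * Z⁻¹ := by
    intro ℓ
    rw [hgibbs]
    rw [show (fun ω : Torus d L → PathSpace => (Real.exp (J * Y ω) / Z) * Xsq (ω ℓ))
        = fun ω => (Xsq (ω ℓ) * Real.exp (J * Y ω)) * Z⁻¹ from funext fun ω => by ring]
    rw [integral_mul_const]
  have hsumS : (∑ ℓ : Torus d L, ∫ ω, Xsq (ω ℓ) ∂(gibbs d L ν J)) = A * Z⁻¹ := by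
    rw [Finset.sum_congr rfl fun ℓ _ => hSl ℓ, ← Finset.sum_mul,
      ← integral_finset_sum Finset.univ (fun ℓ _ => hint_Xexp ℓ)]
    congr 2
    funext ω
    rw [Finset.sum_mul]
  -- B ≤ d * A
  have hBA : B ≤ (d : ℝ) * A := by
    have hptBA : (fun ω => Y ω * Real.exp (J * Y ω))
        ≤ fun ω => (d : ℝ) * ((∑ ℓ, Xsq (ω ℓ)) * Real.exp (J * Y ω)) := by
      intro ω
      have h := mul_le_mul_of_nonneg_right (hYpt ω) (Real.exp_pos (J * Y ω)).le
      calc Y ω * Real.exp (J * Y ω)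
          ≤ ((d : ℝ) * ∑ ℓ, Xsq (ω ℓ)) * Real.exp (J * Y ω) := h
        _ = (d : ℝ) * ((∑ ℓ, Xsq (ω ℓ)) * Real.exp (J * Y ω)) := by ring
    have hmono := integral_mono hint_Yexp (hAint.const_mul (d : ℝ)) hptBA
    rwa [integral_const_mul, ← hAdef] at hmono
  -- conclude
  set S := ∑ ℓ : Torus d L, ∫ ω, Xsq (ω ℓ) ∂(gibbs d L ν J) with hSdef
  have hfinal : Real.log Z ≤ J * d * S := by
    have h1 : Z * Real.log Z ≤ J * ((d : ℝ) * A) := by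
      calc Z * Real.log Z ≤ J * B := hZlog
        _ ≤ J * ((d : ℝ) * A) := mul_le_mul_of_nonneg_left hBA hJ.le
    have hA : A = Z * S := by
      rw [hsumS]
      field_simp
    rw [hA] at h1
    have h2 : Z * Real.log Z ≤ Z * (J * d * S) := by nlinarith [h1]
    exact le_of_mul_le_mul_left h2 hZpos
  have hgoal : (∑ ℓ : Torus d L, ∫ ωΛ : Torus d L → PathSpace,
      (∫ τ : unitInterval, ((ωΛ ℓ).1 τ) ^ 2) ∂(gibbs d L ν J)) = S := rfl
  rw [hgoal, div_le_iff₀ (by positivity : (0:ℝ) < J * d * (((2 * L) ^ d : ℕ) : ℝ))]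
  calc Real.log Z ≤ J * d * S := hfinal
    _ = 1 / (((2 * L) ^ d : ℕ) : ℝ) * S * (J * ↑d * (((2 * L) ^ d : ℕ) : ℝ)) := by
      field_simp
end
end

section
/- There exists a unique function f : [0, ∞) → ℝ with f(0) = 1 and f(ξ · tanh ξ) = (tanh ξ)/ξ for all ξ > 0. This function f is continuous, strictly decreasing on [0, ∞), takes values in (0, 1], and, for every fixed β > 0, the map t ↦ t · f(β/t) is nondecreasing on (0, ∞). -/
open Real Set Filter


lemma tanh_pos {x : ℝ} (hx : 0 < x) : 0 < Real.tanh x := by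
  rw [Real.tanh_eq_sinh_div_cosh]
  exact div_pos (Real.sinh_pos_iff.2 hx) (Real.cosh_pos x)

lemma tanh_strictMono : StrictMono Real.tanh := by
  intro a b hab
  rw [Real.tanh_eq_sinh_div_cosh, Real.tanh_eq_sinh_div_cosh,
    div_lt_div_iff₀ (Real.cosh_pos a) (Real.cosh_pos b)]
  have h1 : Real.sinh (a - b) < 0 := Real.sinh_neg_iff.2 (sub_neg.2 hab)
  rw [Real.sinh_sub] at h1
  linarith

lemma continuous_tanh : Continuous Real.tanh := by
  have : Real.tanh = fun x => Real.sinh x / Real.cosh x := by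
    funext x; exact Real.tanh_eq_sinh_div_cosh x
  rw [this]
  exact Real.continuous_sinh.div Real.continuous_cosh fun x => (Real.cosh_pos x).ne'

lemma tanh_lt_self {x : ℝ} (hx : 0 < x) : Real.tanh x < x := by
  have key : ∀ y ∈ Ici (0:ℝ), ∀ z ∈ Ici (0:ℝ), y < z →
      y * Real.cosh y - Real.sinh y < z * Real.cosh z - Real.sinh z := by
    apply strictMonoOn_of_deriv_pos (convex_Ici 0)
    · exact ((continuous_id.mul Real.continuous_cosh).sub Real.continuous_sinh).continuousOn
    · intro y hy
      rw [interior_Ici, mem_Ioi] at hy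
      have h1 : HasDerivAt (fun z : ℝ => z * Real.cosh z - Real.sinh z)
          (1 * Real.cosh y + y * Real.sinh y - Real.cosh y) y :=
        ((hasDerivAt_id y).mul (Real.hasDerivAt_cosh y)).sub (Real.hasDerivAt_sinh y)
      rw [h1.deriv]
      have := Real.sinh_pos_iff.2 hy
      nlinarith
  have h0 := key 0 (mem_Ici.2 le_rfl) x (mem_Ici.2 hx.le) hx
  simp only [Real.cosh_zero, Real.sinh_zero, zero_mul, sub_zero, zero_sub, neg_zero] at h0
  rw [Real.tanh_eq_sinh_div_cosh, div_lt_iff₀ (Real.cosh_pos x)]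
  linarith

/-- key strict decrease of tanh ξ / ξ -/
lemma tanh_div_strictAnti {a b : ℝ} (ha : 0 < a) (hab : a < b) :
    Real.tanh b / b < Real.tanh a / a := by
  have key : StrictAntiOn (fun ξ : ℝ => Real.sinh ξ / (ξ * Real.cosh ξ)) (Ioi 0) := by
    apply strictAntiOn_of_deriv_neg (convex_Ioi 0)
    · apply ContinuousOn.div Real.continuous_sinh.continuousOn
        (continuous_id.mul Real.continuous_cosh).continuousOn
      intro x hx
      exact (mul_pos (mem_Ioi.1 hx) (Real.cosh_pos x)).ne'
    · intro x hx
      rw [interior_Ioi, mem_Ioi] at hx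
      have hden : x * Real.cosh x ≠ 0 := (mul_pos hx (Real.cosh_pos x)).ne'
      have h1 : HasDerivAt (fun ξ : ℝ => Real.sinh ξ / (ξ * Real.cosh ξ))
          ((Real.cosh x * (x * Real.cosh x) - Real.sinh x *
            (1 * Real.cosh x + x * Real.sinh x)) / (x * Real.cosh x) ^ 2) x :=
        (Real.hasDerivAt_sinh x).div ((hasDerivAt_id x).mul (Real.hasDerivAt_cosh x)) hden
      rw [h1.deriv]
      apply div_neg_of_neg_of_pos
      · have hsc : Real.cosh x ^ 2 - Real.sinh x ^ 2 = 1 := Real.cosh_sq_sub_sinh_sq x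
        have h2 : x < Real.sinh x := Real.self_lt_sinh_iff.2 hx
        have h3 : 1 ≤ Real.cosh x := Real.one_le_cosh x
        nlinarith [Real.sinh_pos_iff.2 hx, Real.cosh_pos x]
      · positivity
  have := key (mem_Ioi.2 ha) (mem_Ioi.2 (ha.trans hab)) hab
  simp only at this
  rw [Real.tanh_eq_sinh_div_cosh, Real.tanh_eq_sinh_div_cosh, div_div, div_div,
    mul_comm (Real.cosh b) b, mul_comm (Real.cosh a) a]
  exact this


noncomputable def phi (ξ : ℝ) : ℝ := ξ * Real.tanh ξ

lemma phi_abs (ξ : ℝ) : phi |ξ| = phi ξ := by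
  rcases abs_cases ξ with ⟨h, _⟩ | ⟨h, _⟩
  · rw [h]
  · rw [h]; unfold phi; rw [Real.tanh_neg]; ring

lemma phi_nonneg {ξ : ℝ} (h : 0 ≤ ξ) : 0 ≤ phi ξ := by
  have : 0 ≤ Real.tanh ξ := by
    rcases h.eq_or_lt with h | h
    · simp [← h, phi, Real.tanh_zero]
    · exact (tanh_pos h).le
  exact mul_nonneg h this

lemma phi_pos {ξ : ℝ} (h : 0 < ξ) : 0 < phi ξ := mul_pos h (tanh_pos h)

lemma phi_strictMonoOn : StrictMonoOn phi (Ici 0) := by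
  intro a ha b hb hab
  rw [mem_Ici] at ha hb
  have h1 : Real.tanh a < Real.tanh b := tanh_strictMono hab
  have h2 : 0 ≤ Real.tanh a := by
    rw [← Real.tanh_zero]
    exact tanh_strictMono.monotone ha
  have hb' : 0 < b := lt_of_le_of_lt ha hab
  calc phi a = a * Real.tanh a := rfl
    _ ≤ a * Real.tanh b := mul_le_mul_of_nonneg_left h1.le ha
    _ < b * Real.tanh b := by
        have := tanh_pos hb'
        exact mul_lt_mul_of_pos_right hab (by linarith)

lemma phi_surj {x : ℝ} (hx : 0 ≤ x) : ∃ ξ, 0 ≤ ξ ∧ phi ξ = x := by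
  set M : ℝ := max 1 (x / Real.tanh 1) with hM
  have ht1 : 0 < Real.tanh 1 := tanh_pos one_pos
  have hM1 : (1:ℝ) ≤ M := le_max_left _ _
  have hMx : x ≤ phi M := by
    have h1 : Real.tanh 1 ≤ Real.tanh M := tanh_strictMono.monotone hM1
    have h2 : x / Real.tanh 1 ≤ M := le_max_right _ _
    calc x = (x / Real.tanh 1) * Real.tanh 1 := by field_simp
      _ ≤ M * Real.tanh 1 := mul_le_mul_of_nonneg_right h2 ht1.le
      _ ≤ M * Real.tanh M := by
          apply mul_le_mul_of_nonneg_left h1; linarith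
  have hcont : ContinuousOn phi (Icc 0 M) :=
    (continuous_id.mul continuous_tanh).continuousOn
  have h0M : (0:ℝ) ≤ M := by linarith
  have := intermediate_value_Icc h0M hcont
  have hx' : x ∈ Icc (phi 0) (phi M) := by
    constructor
    · simpa [phi, Real.tanh_zero] using hx
    · exact hMx
  obtain ⟨ξ, hξmem, hξ⟩ := this hx'
  exact ⟨ξ, hξmem.1, hξ⟩

noncomputable def psi (x : ℝ) : ℝ := |Function.invFun phi x|

lemma psi_nonneg (x : ℝ) : 0 ≤ psi x := abs_nonneg _

lemma phi_psi {x : ℝ} (hx : 0 < x) : phi (psi x) = x := by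
  obtain ⟨ξ, _, hξ⟩ := phi_surj hx.le
  have : phi (Function.invFun phi x) = x := Function.invFun_eq ⟨ξ, hξ⟩
  rw [psi, phi_abs, this]

lemma psi_pos {x : ℝ} (hx : 0 < x) : 0 < psi x := by
  rcases (psi_nonneg x).eq_or_lt with h | h
  · exfalso
    have := phi_psi hx
    rw [← h] at this
    simp [phi, Real.tanh_zero] at this
    exact hx.ne' this.symm
  · exact h

lemma psi_phi {ξ : ℝ} (hξ : 0 < ξ) : psi (phi ξ) = ξ := by
  have hx : 0 < phi ξ := phi_pos hξ
  exact phi_strictMonoOn.injOn (mem_Ici.2 (psi_nonneg _)) (mem_Ici.2 hξ.le) (phi_psi hx)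

noncomputable def bf (x : ℝ) : ℝ := if x = 0 then 1 else Real.tanh (psi x) / psi x

lemma bf_zero : bf 0 = 1 := by simp [bf]

lemma bf_phi {ξ : ℝ} (hξ : 0 < ξ) : bf (phi ξ) = Real.tanh ξ / ξ := by
  have hx : 0 < phi ξ := phi_pos hξ
  rw [bf, if_neg hx.ne', psi_phi hξ]


noncomputable def bg (ξ : ℝ) : ℝ := if ξ = 0 then 1 else Real.tanh ξ / ξ

lemma tendsto_tanh_div : Filter.Tendsto (fun ξ : ℝ => Real.tanh ξ / ξ) (nhdsWithin 0 {(0:ℝ)}ᶜ) (nhds 1) := by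
  have h : HasDerivAt Real.tanh 1 0 := by
    have h1 := (Real.hasDerivAt_sinh 0).div (Real.hasDerivAt_cosh 0) (Real.cosh_pos 0).ne'
    have h2 : (Real.sinh / Real.cosh) = Real.tanh := by
      funext x; exact (Real.tanh_eq_sinh_div_cosh x).symm
    rw [h2] at h1
    refine h1.congr_deriv ?_
    simp
  have h3 := hasDerivAt_iff_tendsto_slope.1 h
  apply h3.congr'
  filter_upwards [self_mem_nhdsWithin] with ξ hξ
  rw [slope_def_field]
  simp [Real.tanh_zero]

lemma continuous_bg : Continuous bg := by
  rw [continuous_iff_continuousAt]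
  intro ξ
  rcases eq_or_ne ξ 0 with rfl | h
  · have h0 : bg 0 = 1 := if_pos rfl
    unfold ContinuousAt
    rw [h0, ← nhdsNE_sup_pure, Filter.tendsto_sup]
    constructor
    · apply tendsto_tanh_div.congr'
      filter_upwards [self_mem_nhdsWithin] with x hx
      exact (if_neg hx).symm
    · have := tendsto_pure_nhds bg 0
      rwa [h0] at this
  · have hc : ContinuousAt (fun x : ℝ => Real.tanh x / x) ξ :=
      continuous_tanh.continuousAt.div continuousAt_id h
    apply hc.congr
    filter_upwards [eventually_ne_nhds h] with x hx
    exact (if_neg hx).symm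

lemma bf_phi' {ξ : ℝ} (hξ : 0 ≤ ξ) : bf (phi ξ) = bg ξ := by
  rcases hξ.eq_or_lt with rfl | h
  · have : phi 0 = 0 := by simp [phi]
    rw [this, bf_zero, bg, if_pos rfl]
  · rw [bf_phi h, bg, if_neg h.ne']

noncomputable def Phi : Ici (0:ℝ) → Ici (0:ℝ) := fun ξ => ⟨phi ξ, phi_nonneg ξ.2⟩

lemma Phi_strictMono : StrictMono Phi := by
  intro a b hab
  exact Subtype.mk_lt_mk.2 (phi_strictMonoOn a.2 b.2 (Subtype.coe_lt_coe.2 hab))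

lemma Phi_surjective : Function.Surjective Phi := by
  rintro ⟨x, hx⟩
  obtain ⟨ξ, hξ0, hξ⟩ := phi_surj hx
  exact ⟨⟨ξ, hξ0⟩, Subtype.ext hξ⟩

noncomputable def e : Ici (0:ℝ) ≃o Ici (0:ℝ) :=
  StrictMono.orderIsoOfSurjective Phi Phi_strictMono Phi_surjective

lemma continuousOn_bf : ContinuousOn bf (Ici 0) := by
  rw [continuousOn_iff_continuous_restrict]
  have key : (Ici (0:ℝ)).restrict bf = (fun ξ : Ici (0:ℝ) => bg ξ) ∘ e.symm := by
    funext x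
    have h1 : Phi (e.symm x) = x :=
      StrictMono.orderIsoOfSurjective_self_symm_apply Phi Phi_strictMono Phi_surjective x
    have h2 : phi ((e.symm x : Ici (0:ℝ)) : ℝ) = (x:ℝ) := congrArg Subtype.val h1
    show bf (x:ℝ) = bg ((e.symm x : Ici (0:ℝ)) : ℝ)
    rw [← h2, bf_phi' (e.symm x).2]
  change Continuous ((Ici (0:ℝ)).restrict bf)
  rw [key]
  exact (continuous_bg.comp continuous_subtype_val).comp e.symm.continuous


lemma bf_eq {x : ℝ} (hx : 0 < x) : bf x = Real.tanh (psi x) / psi x := by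
  rw [bf, if_neg hx.ne']


/-- The Bruch–Falk function: there is a unique function `f` on `[0, ∞)` with
`f(0) = 1` and `f(ξ tanh ξ) = (tanh ξ)/ξ` for `ξ > 0`; it is continuous, strictly
decreasing, takes values in `(0, 1]`, and for each `β > 0` the map `t ↦ t f(β/t)`
is nondecreasing on `(0, ∞)`. -/
theorem bruch_falk_function :
    ∃ f : ℝ → ℝ,
      (f 0 = 1 ∧ ∀ ξ : ℝ, 0 < ξ → f (ξ * Real.tanh ξ) = Real.tanh ξ / ξ) ∧
      (∀ g : ℝ → ℝ,
        (g 0 = 1 ∧ ∀ ξ : ℝ, 0 < ξ → g (ξ * Real.tanh ξ) = Real.tanh ξ / ξ) →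
        ∀ x : ℝ, 0 ≤ x → g x = f x) ∧
      ContinuousOn f (Set.Ici 0) ∧
      StrictAntiOn f (Set.Ici 0) ∧
      (∀ x : ℝ, 0 ≤ x → f x ∈ Set.Ioc (0 : ℝ) 1) ∧
      (∀ β : ℝ, 0 < β → MonotoneOn (fun t : ℝ => t * f (β / t)) (Set.Ioi 0)) := by
  refine ⟨bf, ⟨bf_zero, fun ξ hξ => bf_phi hξ⟩, ?_, continuousOn_bf, ?_, ?_, ?_⟩
  · -- uniqueness
    rintro g ⟨hg0, hg⟩ x hx
    rcases hx.eq_or_lt with rfl | h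
    · rw [hg0, bf_zero]
    · have hψ : 0 < psi x := psi_pos h
      have hφ : psi x * Real.tanh (psi x) = x := phi_psi h
      calc g x = g (psi x * Real.tanh (psi x)) := by rw [hφ]
        _ = Real.tanh (psi x) / psi x := hg _ hψ
        _ = bf x := (bf_eq h).symm
  · -- strict anti
    intro x hx y hy hxy
    rw [mem_Ici] at hx hy
    have hy' : 0 < y := lt_of_le_of_lt hx hxy
    have hζ : 0 < psi y := psi_pos hy'
    rcases hx.eq_or_lt with rfl | hx'
    · rw [bf_zero, bf_eq hy']
      rw [div_lt_one hζ]
      exact tanh_lt_self hζ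
    · have hξ : 0 < psi x := psi_pos hx'
      have hlt : psi x < psi y := by
        apply (phi_strictMonoOn.lt_iff_lt (mem_Ici.2 hξ.le) (mem_Ici.2 hζ.le)).1
        rw [phi_psi hx', phi_psi hy']
        exact hxy
      rw [bf_eq hx', bf_eq hy']
      exact tanh_div_strictAnti hξ hlt
  · -- range
    intro x hx
    rcases hx.eq_or_lt with rfl | h
    · rw [bf_zero]; exact ⟨one_pos, le_refl 1⟩
    · have hψ : 0 < psi x := psi_pos h
      rw [bf_eq h]
      constructor
      · exact div_pos (tanh_pos hψ) hψ
      · rw [div_le_one hψ]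
        exact (tanh_lt_self hψ).le
  · -- monotone
    intro β hβ
    intro s hs t ht hst
    rw [mem_Ioi] at hs ht
    have hx : 0 < β / s := div_pos hβ hs
    have hy : 0 < β / t := div_pos hβ ht
    have hyx : β / t ≤ β / s := by gcongr
    set ξ := psi (β / s) with hξdef
    set ζ := psi (β / t) with hζdef
    have hξ : 0 < ξ := psi_pos hx
    have hζ : 0 < ζ := psi_pos hy
    have hζξ : ζ ≤ ξ := by
      apply (phi_strictMonoOn.le_iff_le (mem_Ici.2 hζ.le) (mem_Ici.2 hξ.le)).1
      rw [phi_psi hy, phi_psi hx]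
      exact hyx
    have hφξ : ξ * Real.tanh ξ = β / s := phi_psi hx
    have hφζ : ζ * Real.tanh ζ = β / t := phi_psi hy
    have htξ : 0 < Real.tanh ξ := tanh_pos hξ
    have htζ : 0 < Real.tanh ζ := tanh_pos hζ
    have h1 : s * bf (β / s) = β / ξ ^ 2 := by
      rw [bf_eq hx, ← hξdef]
      have hs' : s = β / (ξ * Real.tanh ξ) := by
        rw [hφξ]; field_simp
      rw [hs']
      field_simp
    have h2 : t * bf (β / t) = β / ζ ^ 2 := by
      rw [bf_eq hy, ← hζdef]
      have ht' : t = β / (ζ * Real.tanh ζ) := by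
        rw [hφζ]; field_simp
      rw [ht']
      field_simp
    show s * bf (β / s) ≤ t * bf (β / t)
    rw [h1, h2]
    gcongr
end
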